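/- Fix β ∈ (0,2), θ ∈ ℝ, γ > 0, a⁺ > 0, a⁻ > 0, ε⁺ > 0, ε⁻ > 0, L ≥ 0, and a measurable f : ℝ → ℝ with |f(x)| ≤ L for all x; let F′(x) = |x|^{−1−β}(1 + |x|^γ f(x))·(a⁺·1_{0<x≤ε⁺} + a⁻·1_{−ε⁻≤x<0}) and ν̃(z) = |z|^{−1−β}(a⁺·1_{z>0} + a⁻·1_{z<0}). Then, as Δ → 0⁺, ∫_ℝ (exp(iθz) − 1 − iθz·1_{|z|≤1})·Δ^{1+1/β} F′(Δ^{1/β} z) dz converges to ∫_ℝ (exp(iθz) − 1 − iθz·1_{|z|≤1})·ν̃(z) dz. (Dominated-convergence limit of the compensated characteristic exponent, the key step (char) in the proof of Lemma 4 showing convergence to a stable law.) -/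

import Mathlib

open MeasureTheory Filter Set

private lemma abs_rpow_measurable_aux (c : ℝ) : Measurable (fun x : ℝ => |x| ^ c) := by
  fun_prop

private lemma bound_integrable_aux (β : ℝ) (hβ0 : 0 < β) (hβ2 : β < 2) :
    Integrable (fun z : ℝ => if |z| ≤ 1 then |z| ^ (1-β) else |z| ^ (-(1+β))) := by
  set h : ℝ → ℝ := fun z => if |z| ≤ 1 then |z| ^ (1-β) else |z| ^ (-(1+β)) with hhdef
  have e1 : IntegrableOn h (Ioc 0 1) := by
    have hi : IntegrableOn (fun z : ℝ => z ^ (1-β)) (Ioc (0:ℝ) 1) := by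
      rw [integrableOn_Ioc_iff_integrableOn_Ioo]
      exact (intervalIntegral.integrableOn_Ioo_rpow_iff one_pos).2 (by linarith)
    exact hi.congr_fun (fun z hz => by
      simp only [hhdef, abs_of_pos hz.1, if_pos hz.2]) measurableSet_Ioc
  have e2 : IntegrableOn h (Ioi 1) := by
    have hi : IntegrableOn (fun z : ℝ => z ^ (-(1+β))) (Ioi (1:ℝ)) :=
      integrableOn_Ioi_rpow_of_lt (by linarith) one_pos
    exact hi.congr_fun (fun z hz => by
      have h1 : (0:ℝ) < z := lt_trans one_pos hz
      simp only [hhdef, abs_of_pos h1, if_neg (not_le.2 (mem_Ioi.1 hz))]) measurableSet_Ioi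
  have epos : IntegrableOn h (Ioi 0) := by
    rw [← Set.Ioc_union_Ioi_eq_Ioi (zero_le_one (α := ℝ))]
    exact e1.union e2
  have heven : ∀ z : ℝ, h (-z) = h z := fun z => by rw [hhdef]; simp
  have eneg : IntegrableOn h (Iio 0) := by
    rw [← (Measure.measurePreserving_neg (volume : Measure ℝ)).integrableOn_comp_preimage
        (Homeomorph.neg ℝ).measurableEmbedding]
    simp only [Function.comp_def, neg_preimage, neg_Iio, neg_zero]
    exact epos.congr_fun (fun z _ => (heven z).symm) measurableSet_Ioi
  rw [← integrableOn_univ, ← Set.Iio_union_Ici (a := (0:ℝ))]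
  exact eneg.union ((integrableOn_Ici_iff_integrableOn_Ioi (by finiteness)).2 epos)

set_option maxHeartbeats 2000000 in
/-- Dominated-convergence limit of the compensated characteristic exponent (step (char)
in the proof of Lemma 4): as `Δ → 0⁺`,
`∫ (e^{iθz} − 1 − iθz·1_{|z|≤1})·Δ^{1+1/β} F′(Δ^{1/β} z) dz →
  ∫ (e^{iθz} − 1 − iθz·1_{|z|≤1})·ν̃(z) dz`. -/
theorem stable_characteristic_exponent_limit
    (β θ γ apos aneg εpos εneg L : ℝ)
    (hβ : β ∈ Set.Ioo (0 : ℝ) 2) (hγ : 0 < γ)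
    (hapos : 0 < apos) (haneg : 0 < aneg)
    (hεpos : 0 < εpos) (hεneg : 0 < εneg) (hL : 0 ≤ L)
    (f : ℝ → ℝ) (hf : Measurable f) (hfb : ∀ x, |f x| ≤ L)
    (F' : ℝ → ℝ)
    (hF' : ∀ x, F' x = |x| ^ (-(1 + β)) * (1 + |x| ^ γ * f x) *
        ((if 0 < x ∧ x ≤ εpos then apos else 0) +
          (if -εneg ≤ x ∧ x < 0 then aneg else 0)))
    (ν : ℝ → ℝ)
    (hν : ∀ z, ν z = |z| ^ (-(1 + β)) *
        ((if 0 < z then apos else 0) + (if z < 0 then aneg else 0))) :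
    Tendsto (fun Δ : ℝ => ∫ z : ℝ,
        (Complex.exp (Complex.I * θ * z) - 1 -
            Complex.I * θ * z * (if |z| ≤ 1 then 1 else 0)) *
          ((Δ ^ (1 + 1 / β) * F' (Δ ^ (1 / β) * z) : ℝ) : ℂ))
      (nhdsWithin 0 (Set.Ioi 0))
      (nhds (∫ z : ℝ,
        (Complex.exp (Complex.I * θ * z) - 1 -
            Complex.I * θ * z * (if |z| ≤ 1 then 1 else 0)) * ((ν z : ℝ) : ℂ))) := by
  obtain ⟨hβ0, hβ2⟩ := hβ
  have hβne : β ≠ 0 := ne_of_gt hβ0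
  set M : ℝ := max εpos εneg with hM
  have hM0 : 0 < M := lt_of_lt_of_le hεpos (le_max_left _ _)
  set g : ℝ → ℂ := fun z => Complex.exp (Complex.I * θ * z) - 1 -
      Complex.I * θ * z * (if |z| ≤ 1 then 1 else 0) with hgdef
  -- measurability
  have hmeas_if : Measurable fun z : ℝ => (if |z| ≤ 1 then (1:ℂ) else 0) :=
    Measurable.ite (measurableSet_le measurable_abs measurable_const)
      measurable_const measurable_const
  have hgm : Measurable g := by
    apply Measurable.sub
    apply Measurable.sub
    · exact Complex.continuous_exp.measurable.comp
        (Complex.measurable_ofReal.const_mul (Complex.I * θ))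
    · exact measurable_const
    · exact (Complex.measurable_ofReal.const_mul (Complex.I * θ)).mul hmeas_if
  have hF'm : Measurable F' := by
    have hFeq : F' = fun x => |x| ^ (-(1+β)) * (1 + |x| ^ γ * f x) *
        ((if 0 < x ∧ x ≤ εpos then apos else 0) +
          (if -εneg ≤ x ∧ x < 0 then aneg else 0)) := funext hF'
    rw [hFeq]
    apply Measurable.mul
    · apply Measurable.mul
      · exact abs_rpow_measurable_aux _
      · exact measurable_const.add ((abs_rpow_measurable_aux γ).mul hf)
    · exact (Measurable.ite measurableSet_Ioc measurable_const measurable_const).add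
        (Measurable.ite measurableSet_Ico measurable_const measurable_const)
  -- key algebraic identity
  have key : ∀ Δ : ℝ, 0 < Δ → ∀ z : ℝ,
      Δ ^ (1 + 1/β) * F' (Δ ^ (1/β) * z)
      = |z| ^ (-(1+β)) * (1 + |Δ ^ (1/β) * z| ^ γ * f (Δ ^ (1/β) * z)) *
        ((if 0 < Δ ^ (1/β) * z ∧ Δ ^ (1/β) * z ≤ εpos then apos else 0) +
         (if -εneg ≤ Δ ^ (1/β) * z ∧ Δ ^ (1/β) * z < 0 then aneg else 0)) := by
    intro Δ hΔ z
    have hΔβ : 0 < Δ ^ (1/β) := Real.rpow_pos_of_pos hΔ _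
    have h2 : Δ ^ (1 + 1/β) * |Δ ^ (1/β) * z| ^ (-(1+β)) = |z| ^ (-(1+β)) := by
      rw [abs_mul, abs_of_pos hΔβ, Real.mul_rpow hΔβ.le (abs_nonneg z),
        ← Real.rpow_mul hΔ.le, ← mul_assoc, ← Real.rpow_add hΔ,
        show 1 + 1/β + 1/β * (-(1+β)) = 0 by field_simp; ring, Real.rpow_zero, one_mul]
    rw [hF', ← h2]
    ring
  -- bound on the rescaled density
  set K2 : ℝ := (1 + L * M ^ γ) * (apos + aneg) with hK2
  have hK20 : 0 ≤ K2 := by positivity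
  have habs : ∀ Δ : ℝ, 0 < Δ → ∀ z : ℝ,
      |Δ ^ (1 + 1/β) * F' (Δ ^ (1/β) * z)| ≤ K2 * |z| ^ (-(1+β)) := by
    intro Δ hΔ z
    rw [key Δ hΔ z]
    set x := Δ ^ (1/β) * z with hx
    set S := (if 0 < x ∧ x ≤ εpos then apos else 0) +
      (if -εneg ≤ x ∧ x < 0 then aneg else 0) with hSdef
    have hS0 : 0 ≤ S := by
      apply add_nonneg <;> split_ifs <;> first | exact le_rfl | positivity
    have hSle : S ≤ apos + aneg := by
      apply add_le_add <;> split_ifs <;> first | exact le_rfl | positivity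
    by_cases hSz : S = 0
    · rw [hSz, mul_zero, abs_zero]
      positivity
    · have hxM : |x| ≤ M := by
        by_cases h1 : 0 < x ∧ x ≤ εpos
        · rw [abs_of_pos h1.1]; exact h1.2.trans (le_max_left _ _)
        · by_cases h2 : -εneg ≤ x ∧ x < 0
          · rw [abs_of_neg h2.2]
            have := le_max_right εpos εneg
            linarith [h2.1]
          · exact absurd (by rw [hSdef, if_neg h1, if_neg h2, add_zero]) hSz
      have hB : |1 + |x| ^ γ * f x| ≤ 1 + L * M ^ γ := by
        have hb : abs (|x| ^ γ * f x) ≤ M ^ γ * L := by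
          rw [abs_mul, abs_of_nonneg (Real.rpow_nonneg (abs_nonneg x) γ)]
          exact mul_le_mul (Real.rpow_le_rpow (abs_nonneg x) hxM hγ.le) (hfb x)
            (abs_nonneg _) (Real.rpow_nonneg hM0.le γ)
        calc |1 + |x| ^ γ * f x| ≤ |(1:ℝ)| + abs (|x| ^ γ * f x) := abs_add_le _ _
          _ ≤ 1 + M ^ γ * L := by rw [abs_one]; linarith
          _ = 1 + L * M ^ γ := by ring
      have hzpow : (0:ℝ) ≤ |z| ^ (-(1+β)) := Real.rpow_nonneg (abs_nonneg z) _
      rw [abs_mul, abs_mul, abs_of_nonneg hzpow, abs_of_nonneg hS0]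
      calc |z| ^ (-(1+β)) * |1 + |x| ^ γ * f x| * S
          ≤ |z| ^ (-(1+β)) * (1 + L * M ^ γ) * (apos + aneg) := by
            apply mul_le_mul _ hSle hS0 (by positivity)
            exact mul_le_mul le_rfl hB (abs_nonneg _) hzpow
        _ = K2 * |z| ^ (-(1+β)) := by rw [hK2]; ring
  -- bound on the compensated exponential
  have hg1 : ∀ z : ℝ, ‖g z‖ ≤ (if |z| ≤ 1 then 3 * θ^2 * z^2 else 2) := by
    intro z
    by_cases hz : |z| ≤ 1
    · rw [if_pos hz]
      have hgz : g z = Complex.exp (Complex.I * θ * z) - 1 - Complex.I * θ * z := by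
        rw [hgdef]; simp [if_pos hz]
      rw [hgz]
      have hwabs : ‖Complex.I * θ * z‖ = |θ * z| := by
        simp [abs_mul]
      by_cases hθz : |θ * z| ≤ 1
      · have h := Complex.norm_exp_sub_one_sub_id_le (x := Complex.I * θ * z)
          (by rw [hwabs]; exact hθz)
        calc ‖Complex.exp (Complex.I * θ * z) - 1 - Complex.I * θ * z‖
            ≤ ‖Complex.I * θ * z‖ ^ 2 := h
          _ = (θ * z) ^ 2 := by rw [hwabs, sq_abs]
          _ ≤ 3 * θ^2 * z^2 := by nlinarith [sq_nonneg (θ * z)]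
      · push_neg at hθz
        have h1 : (1:ℝ) ≤ (θ * z)^2 := by nlinarith [abs_nonneg (θ * z), sq_abs (θ * z)]
        have hexp : ‖Complex.exp (Complex.I * θ * z)‖ = 1 := by
          rw [show Complex.I * (θ:ℂ) * (z:ℂ) = ((θ * z : ℝ):ℂ) * Complex.I by push_cast; ring,
            Complex.norm_exp_ofReal_mul_I]
        have habs2 : |θ * z| ≤ (θ * z)^2 := by nlinarith [sq_abs (θ * z)]
        calc ‖Complex.exp (Complex.I * θ * z) - 1 - Complex.I * θ * z‖
            ≤ ‖Complex.exp (Complex.I * θ * z) - 1‖ + ‖Complex.I * (θ:ℂ) * (z:ℂ)‖ :=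
              norm_sub_le _ _
          _ ≤ (‖Complex.exp (Complex.I * θ * z)‖ + ‖(1:ℂ)‖) + |θ * z| := by
              have := norm_sub_le (Complex.exp (Complex.I * θ * z)) (1:ℂ)
              have h2 : ‖Complex.I * (θ:ℂ) * (z:ℂ)‖ = |θ * z| := hwabs
              linarith
          _ = 2 + |θ * z| := by
              rw [show ‖Complex.exp (Complex.I * (θ:ℂ) * (z:ℂ))‖ = 1 from hexp]
              norm_num
          _ ≤ 3 * θ^2 * z^2 := by nlinarith
    · rw [if_neg hz]
      have hgz : g z = Complex.exp (Complex.I * θ * z) - 1 := by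
        rw [hgdef]; simp [if_neg hz]
      rw [hgz]
      have hexp : ‖Complex.exp (Complex.I * θ * z)‖ = 1 := by
        rw [show Complex.I * (θ:ℂ) * (z:ℂ) = ((θ * z : ℝ):ℂ) * Complex.I by push_cast; ring,
          Complex.norm_exp_ofReal_mul_I]
      calc ‖Complex.exp (Complex.I * θ * z) - 1‖
          ≤ ‖Complex.exp (Complex.I * θ * z)‖ + ‖(1:ℂ)‖ := norm_sub_le _ _
        _ = 2 := by rw [show ‖Complex.exp (Complex.I * (θ:ℂ) * (z:ℂ))‖ = 1 from hexp]; norm_num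
        _ ≤ 2 := le_rfl
  set K : ℝ := (3 * θ^2 + 2) * K2 with hK
  set bound : ℝ → ℝ := fun z => K * (if |z| ≤ 1 then |z| ^ (1-β) else |z| ^ (-(1+β)))
    with hbounddef
  have hFb : ∀ Δ : ℝ, 0 < Δ → ∀ z : ℝ,
      ‖g z * ((Δ ^ (1 + 1/β) * F' (Δ ^ (1/β) * z) : ℝ) : ℂ)‖ ≤ bound z := by
    intro Δ hΔ z
    rw [norm_mul, Complex.norm_real, Real.norm_eq_abs]
    have h1 := hg1 z
    have h2 := habs Δ hΔ z
    have hg0 : 0 ≤ ‖g z‖ := norm_nonneg _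
    by_cases hz : |z| ≤ 1
    · rw [if_pos hz] at h1
      rw [hbounddef]; simp only [if_pos hz]
      have h3 : z^2 * |z| ^ (-(1+β)) ≤ |z| ^ (1-β) := by
        rcases eq_or_ne z 0 with rfl | hz0
        · simpa using Real.rpow_nonneg (abs_nonneg (0:ℝ)) (1-β)
        · have h0 : 0 < |z| := abs_pos.2 hz0
          have : z^2 * |z| ^ (-(1+β)) = |z| ^ (1-β) := by
            rw [← sq_abs, ← Real.rpow_natCast |z| 2, ← Real.rpow_add h0]
            congr 1
            push_cast
            ring
          linarith [this.le]
      have hzA : (0:ℝ) ≤ |z| ^ (1-β) := Real.rpow_nonneg (abs_nonneg z) _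
      have hzB : (0:ℝ) ≤ |z| ^ (-(1+β)) := Real.rpow_nonneg (abs_nonneg z) _
      have hmul : ‖g z‖ * |Δ ^ (1 + 1/β) * F' (Δ ^ (1/β) * z)| ≤
          (3 * θ^2 * z^2) * (K2 * |z| ^ (-(1+β))) :=
        mul_le_mul h1 h2 (abs_nonneg _) (by positivity)
      have hstep : (3 * θ^2 * z^2) * (K2 * |z| ^ (-(1+β))) ≤ K * |z| ^ (1-β) := by
        rw [hK]
        nlinarith [mul_le_mul_of_nonneg_left h3 (by positivity : (0:ℝ) ≤ 3 * θ^2 * K2),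
          mul_nonneg (mul_nonneg (by norm_num : (0:ℝ) ≤ 2) hK20) hzA]
      linarith
    · rw [if_neg hz] at h1
      rw [hbounddef]; simp only [if_neg hz]
      have hzB : (0:ℝ) ≤ |z| ^ (-(1+β)) := Real.rpow_nonneg (abs_nonneg z) _
      have hmul : ‖g z‖ * |Δ ^ (1 + 1/β) * F' (Δ ^ (1/β) * z)| ≤
          2 * (K2 * |z| ^ (-(1+β))) :=
        mul_le_mul h1 h2 (abs_nonneg _) (by norm_num)
      have hstep : 2 * (K2 * |z| ^ (-(1+β))) ≤ K * |z| ^ (-(1+β)) := by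
        rw [hK]
        nlinarith [mul_nonneg hK20 hzB, sq_nonneg θ,
          mul_nonneg (mul_nonneg (sq_nonneg θ) hK20) hzB]
      linarith
  -- integrability of the bound
  have hboundint : Integrable bound :=
    (bound_integrable_aux β hβ0 hβ2).const_mul K
  -- measurability
  have hmeas_if : Measurable fun z : ℝ => (if |z| ≤ 1 then (1:ℂ) else 0) :=
    Measurable.ite (measurableSet_le measurable_abs measurable_const)
      measurable_const measurable_const
  have hgm : Measurable g := by
    apply Measurable.sub
    apply Measurable.sub
    · exact Complex.continuous_exp.measurable.comp
        (Complex.measurable_ofReal.const_mul (Complex.I * θ))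
    · exact measurable_const
    · exact (Complex.measurable_ofReal.const_mul (Complex.I * θ)).mul hmeas_if
  have hF'm : Measurable F' := by
    have hFeq : F' = fun x => |x| ^ (-(1+β)) * (1 + |x| ^ γ * f x) *
        ((if 0 < x ∧ x ≤ εpos then apos else 0) +
          (if -εneg ≤ x ∧ x < 0 then aneg else 0)) := funext hF'
    rw [hFeq]
    apply Measurable.mul
    · apply Measurable.mul
      · exact abs_rpow_measurable_aux _
      · exact measurable_const.add ((abs_rpow_measurable_aux γ).mul hf)
    · exact (Measurable.ite measurableSet_Ioc measurable_const measurable_const).add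
        (Measurable.ite measurableSet_Ico measurable_const measurable_const)
  -- key algebraic identity
  have key : ∀ Δ : ℝ, 0 < Δ → ∀ z : ℝ,
      Δ ^ (1 + 1/β) * F' (Δ ^ (1/β) * z)
      = |z| ^ (-(1+β)) * (1 + |Δ ^ (1/β) * z| ^ γ * f (Δ ^ (1/β) * z)) *
        ((if 0 < Δ ^ (1/β) * z ∧ Δ ^ (1/β) * z ≤ εpos then apos else 0) +
         (if -εneg ≤ Δ ^ (1/β) * z ∧ Δ ^ (1/β) * z < 0 then aneg else 0)) := by
    intro Δ hΔ z
    have hΔβ : 0 < Δ ^ (1/β) := Real.rpow_pos_of_pos hΔ _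
    have h2 : Δ ^ (1 + 1/β) * |Δ ^ (1/β) * z| ^ (-(1+β)) = |z| ^ (-(1+β)) := by
      rw [abs_mul, abs_of_pos hΔβ, Real.mul_rpow hΔβ.le (abs_nonneg z),
        ← Real.rpow_mul hΔ.le, ← mul_assoc, ← Real.rpow_add hΔ,
        show 1 + 1/β + 1/β * (-(1+β)) = 0 by field_simp; ring, Real.rpow_zero, one_mul]
    rw [hF', ← h2]
    ring
  -- bound on the rescaled density
  set K2 : ℝ := (1 + L * M ^ γ) * (apos + aneg) with hK2
  have hK20 : 0 ≤ K2 := by positivity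
  have habs : ∀ Δ : ℝ, 0 < Δ → ∀ z : ℝ,
      |Δ ^ (1 + 1/β) * F' (Δ ^ (1/β) * z)| ≤ K2 * |z| ^ (-(1+β)) := by
    intro Δ hΔ z
    rw [key Δ hΔ z]
    set x := Δ ^ (1/β) * z with hx
    set S := (if 0 < x ∧ x ≤ εpos then apos else 0) +
      (if -εneg ≤ x ∧ x < 0 then aneg else 0) with hSdef
    have hS0 : 0 ≤ S := by
      apply add_nonneg <;> split_ifs <;> first | exact le_rfl | positivity
    have hSle : S ≤ apos + aneg := by
      apply add_le_add <;> split_ifs <;> first | exact le_rfl | positivity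
    by_cases hSz : S = 0
    · rw [hSz, mul_zero, abs_zero]
      positivity
    · have hxM : |x| ≤ M := by
        by_cases h1 : 0 < x ∧ x ≤ εpos
        · rw [abs_of_pos h1.1]; exact h1.2.trans (le_max_left _ _)
        · by_cases h2 : -εneg ≤ x ∧ x < 0
          · rw [abs_of_neg h2.2]
            have := le_max_right εpos εneg
            linarith [h2.1]
          · exact absurd (by rw [hSdef, if_neg h1, if_neg h2, add_zero]) hSz
      have hB : |1 + |x| ^ γ * f x| ≤ 1 + L * M ^ γ := by
        have hb : abs (|x| ^ γ * f x) ≤ M ^ γ * L := by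
          rw [abs_mul, abs_of_nonneg (Real.rpow_nonneg (abs_nonneg x) γ)]
          exact mul_le_mul (Real.rpow_le_rpow (abs_nonneg x) hxM hγ.le) (hfb x)
            (abs_nonneg _) (Real.rpow_nonneg hM0.le γ)
        calc |1 + |x| ^ γ * f x| ≤ |(1:ℝ)| + abs (|x| ^ γ * f x) := abs_add_le _ _
          _ ≤ 1 + M ^ γ * L := by rw [abs_one]; linarith
          _ = 1 + L * M ^ γ := by ring
      have hzpow : (0:ℝ) ≤ |z| ^ (-(1+β)) := Real.rpow_nonneg (abs_nonneg z) _
      rw [abs_mul, abs_mul, abs_of_nonneg hzpow, abs_of_nonneg hS0]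
      calc |z| ^ (-(1+β)) * |1 + |x| ^ γ * f x| * S
          ≤ |z| ^ (-(1+β)) * (1 + L * M ^ γ) * (apos + aneg) := by
            apply mul_le_mul _ hSle hS0 (by positivity)
            exact mul_le_mul le_rfl hB (abs_nonneg _) hzpow
        _ = K2 * |z| ^ (-(1+β)) := by rw [hK2]; ring
  -- bound on the compensated exponential
  have hg1 : ∀ z : ℝ, ‖g z‖ ≤ (if |z| ≤ 1 then 3 * θ^2 * z^2 else 2) := by
    intro z
    by_cases hz : |z| ≤ 1
    · rw [if_pos hz]
      have hgz : g z = Complex.exp (Complex.I * θ * z) - 1 - Complex.I * θ * z := by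
        rw [hgdef]; simp [if_pos hz]
      rw [hgz]
      have hwabs : ‖Complex.I * θ * z‖ = |θ * z| := by
        simp [abs_mul]
      by_cases hθz : |θ * z| ≤ 1
      · have h := Complex.norm_exp_sub_one_sub_id_le (x := Complex.I * θ * z)
          (by rw [hwabs]; exact hθz)
        calc ‖Complex.exp (Complex.I * θ * z) - 1 - Complex.I * θ * z‖
            ≤ ‖Complex.I * θ * z‖ ^ 2 := h
          _ = (θ * z) ^ 2 := by rw [hwabs, sq_abs]
          _ ≤ 3 * θ^2 * z^2 := by nlinarith [sq_nonneg (θ * z)]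
      · push_neg at hθz
        have h1 : (1:ℝ) ≤ (θ * z)^2 := by nlinarith [abs_nonneg (θ * z), sq_abs (θ * z)]
        have hexp : ‖Complex.exp (Complex.I * θ * z)‖ = 1 := by
          rw [show Complex.I * (θ:ℂ) * (z:ℂ) = ((θ * z : ℝ):ℂ) * Complex.I by push_cast; ring,
            Complex.norm_exp_ofReal_mul_I]
        have habs2 : |θ * z| ≤ (θ * z)^2 := by nlinarith [sq_abs (θ * z)]
        calc ‖Complex.exp (Complex.I * θ * z) - 1 - Complex.I * θ * z‖
            ≤ ‖Complex.exp (Complex.I * θ * z) - 1‖ + ‖Complex.I * (θ:ℂ) * (z:ℂ)‖ :=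
              norm_sub_le _ _
          _ ≤ (‖Complex.exp (Complex.I * θ * z)‖ + ‖(1:ℂ)‖) + |θ * z| := by
              have := norm_sub_le (Complex.exp (Complex.I * θ * z)) (1:ℂ)
              have h2 : ‖Complex.I * (θ:ℂ) * (z:ℂ)‖ = |θ * z| := hwabs
              linarith
          _ = 2 + |θ * z| := by
              rw [show ‖Complex.exp (Complex.I * (θ:ℂ) * (z:ℂ))‖ = 1 from hexp]
              norm_num
          _ ≤ 3 * θ^2 * z^2 := by nlinarith
    · rw [if_neg hz]
      have hgz : g z = Complex.exp (Complex.I * θ * z) - 1 := by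
        rw [hgdef]; simp [if_neg hz]
      rw [hgz]
      have hexp : ‖Complex.exp (Complex.I * θ * z)‖ = 1 := by
        rw [show Complex.I * (θ:ℂ) * (z:ℂ) = ((θ * z : ℝ):ℂ) * Complex.I by push_cast; ring,
          Complex.norm_exp_ofReal_mul_I]
      calc ‖Complex.exp (Complex.I * θ * z) - 1‖
          ≤ ‖Complex.exp (Complex.I * θ * z)‖ + ‖(1:ℂ)‖ := norm_sub_le _ _
        _ = 2 := by rw [show ‖Complex.exp (Complex.I * (θ:ℂ) * (z:ℂ))‖ = 1 from hexp]; norm_num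
        _ ≤ 2 := le_rfl
  set K : ℝ := (3 * θ^2 + 2) * K2 with hK
  set bound : ℝ → ℝ := fun z => K * (if |z| ≤ 1 then |z| ^ (1-β) else |z| ^ (-(1+β)))
    with hbounddef
  have hFb : ∀ Δ : ℝ, 0 < Δ → ∀ z : ℝ,
      ‖g z * ((Δ ^ (1 + 1/β) * F' (Δ ^ (1/β) * z) : ℝ) : ℂ)‖ ≤ bound z := by
    intro Δ hΔ z
    rw [norm_mul, Complex.norm_real, Real.norm_eq_abs]
    have h1 := hg1 z
    have h2 := habs Δ hΔ z
    have hg0 : 0 ≤ ‖g z‖ := norm_nonneg _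
    by_cases hz : |z| ≤ 1
    · rw [if_pos hz] at h1
      rw [hbounddef]; simp only [if_pos hz]
      have h3 : z^2 * |z| ^ (-(1+β)) ≤ |z| ^ (1-β) := by
        rcases eq_or_ne z 0 with rfl | hz0
        · simpa using Real.rpow_nonneg (abs_nonneg (0:ℝ)) (1-β)
        · have h0 : 0 < |z| := abs_pos.2 hz0
          have : z^2 * |z| ^ (-(1+β)) = |z| ^ (1-β) := by
            rw [← sq_abs, ← Real.rpow_natCast |z| 2, ← Real.rpow_add h0]
            congr 1
            push_cast
            ring
          linarith [this.le]
      have hzA : (0:ℝ) ≤ |z| ^ (1-β) := Real.rpow_nonneg (abs_nonneg z) _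
      have hzB : (0:ℝ) ≤ |z| ^ (-(1+β)) := Real.rpow_nonneg (abs_nonneg z) _
      have hmul : ‖g z‖ * |Δ ^ (1 + 1/β) * F' (Δ ^ (1/β) * z)| ≤
          (3 * θ^2 * z^2) * (K2 * |z| ^ (-(1+β))) :=
        mul_le_mul h1 h2 (abs_nonneg _) (by positivity)
      have hstep : (3 * θ^2 * z^2) * (K2 * |z| ^ (-(1+β))) ≤ K * |z| ^ (1-β) := by
        rw [hK]
        nlinarith [mul_le_mul_of_nonneg_left h3 (by positivity : (0:ℝ) ≤ 3 * θ^2 * K2),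
          mul_nonneg (mul_nonneg (by norm_num : (0:ℝ) ≤ 2) hK20) hzA]
      linarith
    · rw [if_neg hz] at h1
      rw [hbounddef]; simp only [if_neg hz]
      have hzB : (0:ℝ) ≤ |z| ^ (-(1+β)) := Real.rpow_nonneg (abs_nonneg z) _
      have hmul : ‖g z‖ * |Δ ^ (1 + 1/β) * F' (Δ ^ (1/β) * z)| ≤
          2 * (K2 * |z| ^ (-(1+β))) :=
        mul_le_mul h1 h2 (abs_nonneg _) (by norm_num)
      have hstep : 2 * (K2 * |z| ^ (-(1+β))) ≤ K * |z| ^ (-(1+β)) := by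
        rw [hK]
        nlinarith [mul_nonneg hK20 hzB, sq_nonneg θ,
          mul_nonneg (mul_nonneg (sq_nonneg θ) hK20) hzB]
      linarith
  -- integrability of the bound
  have hboundint : Integrable bound := by
    set h : ℝ → ℝ := fun z => if |z| ≤ 1 then |z| ^ (1-β) else |z| ^ (-(1+β)) with hhdef
    have e1 : IntegrableOn h (Ioc 0 1) := by
      have hi : IntegrableOn (fun z : ℝ => z ^ (1-β)) (Ioc (0:ℝ) 1) := by
        rw [integrableOn_Ioc_iff_integrableOn_Ioo]
        exact (intervalIntegral.integrableOn_Ioo_rpow_iff one_pos).2 (by linarith)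
      exact hi.congr_fun (fun z hz => by
        simp only [hhdef, abs_of_pos hz.1, if_pos hz.2]) measurableSet_Ioc
    have e2 : IntegrableOn h (Ioi 1) := by
      have hi : IntegrableOn (fun z : ℝ => z ^ (-(1+β))) (Ioi (1:ℝ)) :=
        integrableOn_Ioi_rpow_of_lt (by linarith) one_pos
      exact hi.congr_fun (fun z hz => by
        have h1 : (0:ℝ) < z := lt_trans one_pos hz
        simp only [hhdef, abs_of_pos h1, if_neg (not_le.2 (mem_Ioi.1 hz))]) measurableSet_Ioi
    have epos : IntegrableOn h (Ioi 0) := by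
      rw [← Set.Ioc_union_Ioi_eq_Ioi (zero_le_one (α := ℝ))]
      exact e1.union e2
    have heven : ∀ z : ℝ, h (-z) = h z := fun z => by rw [hhdef]; simp
    have eneg : IntegrableOn h (Iio 0) := by
      rw [← (Measure.measurePreserving_neg (volume : Measure ℝ)).integrableOn_comp_preimage
          (Homeomorph.neg ℝ).measurableEmbedding]
      simp only [Function.comp_def, neg_preimage, neg_Iio, neg_zero]
      exact epos.congr_fun (fun z _ => (heven z).symm) measurableSet_Ioi
    have : Integrable h := by
      rw [← integrableOn_univ, ← Set.Iio_union_Ici (a := (0:ℝ))]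
      exact eneg.union ((integrableOn_Ici_iff_integrableOn_Ioi (by finiteness)).2 epos)
    exact this.const_mul K
  -- a.e. pointwise limit
  have hroot : Tendsto (fun Δ : ℝ => Δ ^ (1/β)) (nhdsWithin 0 (Ioi 0))
      (nhdsWithin 0 (Ioi 0)) := by
    rw [tendsto_nhdsWithin_iff]
    constructor
    · have hc : ContinuousAt (fun Δ : ℝ => Δ ^ (1/β)) 0 :=
        Real.continuousAt_rpow_const 0 (1/β) (Or.inr (by positivity))
      have h := hc.tendsto
      rw [Real.zero_rpow (by positivity : (0:ℝ) < 1/β).ne'] at h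
      exact h.mono_left nhdsWithin_le_nhds
    · filter_upwards [self_mem_nhdsWithin] with Δ hΔ
      exact Real.rpow_pos_of_pos hΔ _
  have h0 : ∀ᵐ z : ℝ, z ≠ 0 := by
    rw [ae_iff]
    simp only [not_ne_iff]
    simpa using Real.volume_singleton (x := (0:ℝ))
  have hlim : ∀ᵐ z : ℝ, Tendsto
      (fun Δ : ℝ => g z * ((Δ ^ (1 + 1/β) * F' (Δ ^ (1/β) * z) : ℝ) : ℂ))
      (nhdsWithin 0 (Ioi 0)) (nhds (g z * ((ν z : ℝ) : ℂ))) := by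
    filter_upwards [h0] with z hz
    set S : ℝ := (if 0 < z then apos else 0) + (if z < 0 then aneg else 0) with hSdef
    have hmain : Tendsto (fun Δ : ℝ => Δ ^ (1 + 1/β) * F' (Δ ^ (1/β) * z))
        (nhdsWithin 0 (Ioi 0)) (nhds (ν z)) := by
      have hsm : ∀ᶠ Δ in nhdsWithin 0 (Ioi 0), Δ ^ (1/β) * |z| < min εpos εneg := by
        have ht : Tendsto (fun Δ : ℝ => Δ ^ (1/β) * |z|) (nhdsWithin 0 (Ioi 0))
            (nhds (0 * |z|)) := (hroot.mono_right nhdsWithin_le_nhds).mul_const _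
        rw [zero_mul] at ht
        exact ht.eventually_lt_const (lt_min hεpos hεneg)
      have hev : ∀ᶠ Δ in nhdsWithin 0 (Ioi 0),
          Δ ^ (1 + 1/β) * F' (Δ ^ (1/β) * z)
          = |z| ^ (-(1+β)) * (1 + |Δ ^ (1/β) * z| ^ γ * f (Δ ^ (1/β) * z)) * S := by
        filter_upwards [self_mem_nhdsWithin, hsm] with Δ hΔp hΔs
        rw [key Δ hΔp z]
        congr 1
        have hΔβ : 0 < Δ ^ (1/β) := Real.rpow_pos_of_pos hΔp _
        rcases lt_or_gt_of_ne hz with hzn | hzp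
        · -- z < 0
          have hx0 : Δ ^ (1/β) * z < 0 := mul_neg_of_pos_of_neg hΔβ hzn
          have hge : -εneg ≤ Δ ^ (1/β) * z := by
            have : Δ ^ (1/β) * |z| < εneg := lt_of_lt_of_le hΔs (min_le_right _ _)
            rw [abs_of_neg hzn] at this
            nlinarith
          rw [hSdef, if_neg (by intro h; linarith [h.1, hx0]),
            if_pos ⟨hge, hx0⟩, if_neg (not_lt.2 hzn.le), if_pos hzn]
        · -- 0 < z
          have hx0 : 0 < Δ ^ (1/β) * z := mul_pos hΔβ hzp
          have hle : Δ ^ (1/β) * z ≤ εpos := by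
            have : Δ ^ (1/β) * |z| < εpos := lt_of_lt_of_le hΔs (min_le_left _ _)
            rw [abs_of_pos hzp] at this
            linarith
          rw [hSdef, if_pos ⟨hx0, hle⟩, if_neg (by intro h; linarith [h.2, hx0]),
            if_pos hzp, if_neg (not_lt.2 hzp.le)]
      have hu : Tendsto (fun Δ : ℝ => |Δ ^ (1/β) * z| ^ γ * f (Δ ^ (1/β) * z))
          (nhdsWithin 0 (Ioi 0)) (nhds 0) := by
        have h1 : Tendsto (fun Δ : ℝ => |Δ ^ (1/β) * z|) (nhdsWithin 0 (Ioi 0))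
            (nhds 0) := by
          have ht := ((hroot.mono_right nhdsWithin_le_nhds).mul_const z).abs
          rw [zero_mul, abs_zero] at ht
          exact ht
        have hc : ContinuousAt (fun t : ℝ => t ^ γ) 0 :=
          Real.continuousAt_rpow_const 0 γ (Or.inr hγ.le)
        have h2 : Tendsto (fun Δ : ℝ => |Δ ^ (1/β) * z| ^ γ) (nhdsWithin 0 (Ioi 0))
            (nhds 0) := by
          have := hc.tendsto.comp h1
          rwa [Real.zero_rpow hγ.ne'] at this
        apply squeeze_zero_norm (a := fun Δ : ℝ => |Δ ^ (1/β) * z| ^ γ * L)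
        · intro Δ
          rw [Real.norm_eq_abs, abs_mul,
            abs_of_nonneg (Real.rpow_nonneg (abs_nonneg _) γ)]
          exact mul_le_mul_of_nonneg_left (hfb _)
            (Real.rpow_nonneg (abs_nonneg _) γ)
        · simpa using h2.mul_const L
      have hT : Tendsto (fun Δ : ℝ =>
          |z| ^ (-(1+β)) * (1 + |Δ ^ (1/β) * z| ^ γ * f (Δ ^ (1/β) * z)) * S)
          (nhdsWithin 0 (Ioi 0)) (nhds (|z| ^ (-(1+β)) * (1 + 0) * S)) :=
        ((tendsto_const_nhds.add hu).const_mul _).mul_const _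
      refine Tendsto.congr' (Filter.EventuallyEq.symm (hev : (fun Δ : ℝ => Δ ^ (1 + 1/β) * F' (Δ ^ (1/β) * z)) =ᶠ[nhdsWithin 0 (Ioi 0)] _)) ?_
      convert hT using 2
      rw [hν z, hSdef]
      ring
    have hcomp := (Complex.continuous_ofReal.tendsto (ν z)).comp hmain
    simpa [Function.comp] using hcomp.const_mul (g z)
  -- dominated convergence
  refine tendsto_integral_filter_of_dominated_convergence bound ?_ ?_ hboundint hlim
  · filter_upwards with Δ
    exact (hgm.mul (Complex.measurable_ofReal.comp
      ((hF'm.comp (measurable_id.const_mul _)).const_mul _))).aestronglyMeasurable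
  · filter_upwards [self_mem_nhdsWithin] with Δ (hΔ : Δ ∈ Ioi 0)
    exact ae_of_all _ (fun z => hFb Δ hΔ z)
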